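/- For every monic irreducible polynomial π ∈ F_q[x] and all integers 0 ≤ m ≤ k, the K-binomial coefficient satisfies |binom(k,m)_K|_π ≤ 1; equivalently, v_π(binom(k,m)_K) ≥ 0, i.e., binom(k,m)_K is integral at every place of F_q(x) corresponding to a monic irreducible polynomial. -/

import Mathlib

noncomputable section

open Polynomial

/-- The Carlitz factorial `D_i = [i]·[i-1]^q ⋯ [1]^{q^{i-1}} ∈ F_q[x]`
(where `[i] = x^{q^i} - x`), defined via `D_0 = 1`, `D_{i+1} = [i+1]·D_i^q`. -/
def Dcar (q : ℕ) (F : Type) [Field F] : ℕ → Polynomial F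
  | 0 => 1
  | i + 1 => (X ^ q ^ (i + 1) - X) * (Dcar q F i) ^ q

/-- `L_i = [i]·[i-1] ⋯ [1] ∈ F_q[x]`, via `L_0 = 1`, `L_{i+1} = [i+1]·L_i`. -/
def Lcar (q : ℕ) (F : Type) [Field F] : ℕ → Polynomial F
  | 0 => 1
  | i + 1 => (X ^ q ^ (i + 1) - X) * Lcar q F i

/-- The `K`-binomial coefficient `binom(k,m)_K = D_k/(D_m · D_{k-m}^{q^m}) ∈ F_q(x)`
for `0 ≤ m ≤ k`, with the convention that it vanishes for `m < 0` or `m > k`. -/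
def Kb (q : ℕ) (F : Type) [Field F] (k : ℕ) (m : ℤ) : RatFunc F :=
  if 0 ≤ m ∧ m ≤ (k : ℤ) then
    algebraMap (Polynomial F) (RatFunc F) (Dcar q F k) /
      (algebraMap (Polynomial F) (RatFunc F) (Dcar q F m.toNat) *
        algebraMap (Polynomial F) (RatFunc F) (Dcar q F (k - m.toNat)) ^ q ^ m.toNat)
  else 0

/-- The `π`-adic additive valuation `v_π` on `F_q(x)`, normalized by `v_π(π) = 1`
(for `π` irreducible): the multiplicity of `π` in the numerator minus the
multiplicity of `π` in the denominator. -/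
def vpol {F : Type} [Field F] (π : Polynomial F) (t : RatFunc F) : ℤ :=
  (multiplicity π t.num : ℤ) - (multiplicity π t.denom : ℤ)

/-- If `q ≥ 2` and `q^a - 1 ∣ q^b - 1` with `a > 0`, then `a ∣ b`. -/
lemma nat_dvd_of_pow_sub_one_dvd {q : ℕ} (hq : 2 ≤ q) :
    ∀ b : ℕ, ∀ {a : ℕ}, 0 < a → (q ^ a - 1 ∣ q ^ b - 1) → a ∣ b := by
  intro b
  induction b using Nat.strong_induction_on with
  | _ b ih =>
    intro a ha h
    rcases Nat.eq_zero_or_pos b with rfl | hb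
    · exact dvd_zero a
    have hqb1 : 1 ≤ q ^ b := Nat.one_le_pow _ _ (by omega)
    have hqa1 : 1 ≤ q ^ a := Nat.one_le_pow _ _ (by omega)
    have hab : a ≤ b := by
      by_contra hlt
      push_neg at hlt
      have h1 : 0 < q ^ b - 1 := by
        have : 1 < q ^ b := Nat.one_lt_pow (by omega) hq
        omega
      have h2 := Nat.le_of_dvd h1 h
      have h3 : q ^ b < q ^ a := Nat.pow_lt_pow_right (by omega) hlt
      omega
    have hble : q ^ (b - a) ≤ q ^ b := Nat.pow_le_pow_right (by omega) (by omega)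
    have hba1 : 1 ≤ q ^ (b - a) := Nat.one_le_pow _ _ (by omega)
    have key : q ^ a - 1 ∣ q ^ (b - a) - 1 := by
      have h2 : q ^ a - 1 ∣ q ^ b - q ^ (b - a) := by
        have hmul : q ^ (b - a) * (q ^ a - 1) = q ^ b - q ^ (b - a) := by
          rw [Nat.mul_sub, mul_one, ← pow_add]
          congr 2
          omega
        exact hmul ▸ dvd_mul_left _ _
      have h3 : q ^ (b - a) - 1 = (q ^ b - 1) - (q ^ b - q ^ (b - a)) := by omega
      rw [h3]
      exact Nat.dvd_sub h h2
    obtain ⟨c, hc⟩ := ih (b - a) (by omega) ha key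
    exact ⟨c + 1, by rw [Nat.mul_succ, ← hc]; omega⟩

/-- An irreducible polynomial over a finite field `K` with `q` elements divides
`X^{q^n} - X` iff its degree divides `n`. -/
lemma irred_dvd_galois_poly_iff {K : Type} [Field K] [Fintype K] (p : ℕ) [Fact p.Prime]
    [CharP K p] {π : K[X]} (hirr : Irreducible π) (n : ℕ) :
    π ∣ X ^ (Fintype.card K) ^ n - X ↔ π.natDegree ∣ n := by
  classical
  haveI := Fact.mk hirr
  set q := Fintype.card K with hq
  set L := AdjoinRoot π with hL
  set α : L := AdjoinRoot.root π with hα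
  haveI : Fintype L := Module.fintypeOfFintype (AdjoinRoot.powerBasis hirr.ne_zero).basis
  have hcardL : Fintype.card L = q ^ π.natDegree := by
    rw [Module.card_fintype (AdjoinRoot.powerBasis hirr.ne_zero).basis, Fintype.card_fin,
      AdjoinRoot.powerBasis_dim, hq]
  have hmk : ∀ m : ℕ, (π ∣ X ^ m - X) ↔ α ^ m = α := by
    intro m
    rw [← AdjoinRoot.mk_eq_zero, map_sub, map_pow, AdjoinRoot.mk_X, sub_eq_zero]
  constructor
  · intro h
    have hroot : α ^ q ^ n = α := (hmk _).mp h
    obtain ⟨e, hp, hcard⟩ := FiniteField.card K p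
    haveI : CharP L p := charP_of_injective_algebraMap (algebraMap K L).injective p
    have hfix : ∀ x : L, x ^ q ^ n = x := by
      have hqn : q ^ n = p ^ ((e : ℕ) * n) := by rw [hq, hcard, ← pow_mul]
      let φ : L →ₐ[K] L :=
        { toRingHom := iterateFrobenius L p ((e : ℕ) * n)
          commutes' := by
            intro c
            simp only [RingHom.toMonoidHom_eq_coe, OneHom.toFun_eq_coe, MonoidHom.toOneHom_coe,
              MonoidHom.coe_coe, iterateFrobenius_def]
            rw [← map_pow, ← hqn, FiniteField.pow_card_pow] }
      have hφ : φ = AlgHom.id K L := by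
        apply AdjoinRoot.algHom_ext
        show iterateFrobenius L p ((e : ℕ) * n) α = α
        rw [iterateFrobenius_def, ← hqn, hroot]
      intro x
      rw [hqn, ← iterateFrobenius_def p ((e : ℕ) * n) x]
      exact DFunLike.congr_fun hφ x
    obtain ⟨g, hg⟩ := IsCyclic.exists_generator (α := Lˣ)
    have hord : orderOf g = q ^ π.natDegree - 1 := by
      rw [orderOf_eq_card_of_forall_mem_zpowers hg, Nat.card_eq_fintype_card,
        Fintype.card_units, hcardL]
    have hqn1 : 1 ≤ q ^ n := Nat.one_le_pow _ _ Fintype.card_pos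
    have hgpow : g ^ (q ^ n - 1) = 1 := by
      have h1 : g ^ q ^ n = g := Units.ext (by push_cast [Units.val_pow_eq_pow_val]; exact hfix g)
      have h2 : g ^ (q ^ n - 1) * g = 1 * g := by
        rw [← pow_succ, Nat.sub_add_cancel hqn1, h1, one_mul]
      exact mul_right_cancel h2
    have hdvd : q ^ π.natDegree - 1 ∣ q ^ n - 1 := hord ▸ orderOf_dvd_of_pow_eq_one hgpow
    exact nat_dvd_of_pow_sub_one_dvd Fintype.one_lt_card _ hirr.natDegree_pos hdvd
  · rintro ⟨c, hc⟩
    refine (hmk _).mpr ?_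
    have h1 : α ^ Fintype.card L ^ c = α := FiniteField.pow_card_pow c α
    rwa [hcardL, ← pow_mul, ← hc] at h1

/-- The multiplicity of an irreducible `π` in `X^{q^n} - X` (for `n ≥ 1`):
it is `1` if `deg π ∣ n` and `0` otherwise. -/
lemma mult_galois_poly {K : Type} [Field K] [Fintype K] (p : ℕ) [Fact p.Prime]
    [CharP K p] {π : K[X]} (hirr : Irreducible π) {n : ℕ} (hn : n ≠ 0) :
    multiplicity π (X ^ (Fintype.card K) ^ n - X : K[X])
      = if π.natDegree ∣ n then 1 else 0 := by
  have hpq : p ∣ Fintype.card K ^ n := by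
    obtain ⟨e, hp, hcard⟩ := FiniteField.card K p
    rw [hcard, ← pow_mul]
    exact dvd_pow_self p (by positivity)
  have hsf : Squarefree (X ^ (Fintype.card K) ^ n - X : K[X]) :=
    (galois_poly_separable p _ hpq).squarefree
  by_cases hd : π.natDegree ∣ n
  · rw [if_pos hd]
    have hdvd : π ∣ X ^ (Fintype.card K) ^ n - X := (irred_dvd_galois_poly_iff p hirr n).mpr hd
    refine multiplicity_eq_of_dvd_of_not_dvd (by simpa using hdvd) ?_
    intro h2
    rw [show (1:ℕ) + 1 = 2 from rfl, sq] at h2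
    exact hirr.not_isUnit (hsf π h2)
  · rw [if_neg hd, multiplicity_eq_zero]
    exact fun h => hd ((irred_dvd_galois_poly_iff p hirr n).mp h)

/-- The π-adic divisor sum `S_i = ∑_{1 ≤ j ≤ i/δ} q^{i - jδ}`. -/
def Scar (q δ : ℕ) (i : ℕ) : ℕ := ∑ j ∈ Finset.Ioc 0 (i / δ), q ^ (i - j * δ)

lemma Dcar_ne_zero {F : Type} [Field F] {q : ℕ} (hq : 1 < q) (i : ℕ) : Dcar q F i ≠ 0 := by
  induction i with
  | zero => simp [Dcar]
  | succ i ih =>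
    exact mul_ne_zero (FiniteField.X_pow_card_pow_sub_X_ne_zero F (Nat.succ_ne_zero i) hq)
      (pow_ne_zero _ ih)

lemma Scar_succ {q δ : ℕ} (hδ : 0 < δ) (i : ℕ) :
    Scar q δ (i + 1) = (if δ ∣ (i + 1) then 1 else 0) + q * Scar q δ i := by
  unfold Scar
  rw [Finset.mul_sum]
  have hterm : ∀ j ∈ Finset.Ioc 0 (i / δ), q * q ^ (i - j * δ) = q ^ (i + 1 - j * δ) := by
    intro j hj
    have hj2 := (Finset.mem_Ioc.mp hj).2
    have hjd : j * δ ≤ i := (Nat.le_div_iff_mul_le hδ).mp hj2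
    rw [← pow_succ']
    congr 1
    omega
  rw [Nat.succ_div]
  by_cases hd : δ ∣ i + 1
  · simp only [hd, if_true]
    rw [Finset.sum_Ioc_succ_top (Nat.zero_le _)]
    have htop : i + 1 - (i / δ + 1) * δ = 0 := by
      have h1 : (i / δ + 1) * δ = i + 1 := by
        have h2 : (i + 1) / δ * δ = i + 1 := Nat.div_mul_cancel hd
        have h3 : (i + 1) / δ = i / δ + 1 := by rw [Nat.succ_div, if_pos hd]
        rw [← h3, h2]
      omega
    rw [htop, pow_zero, Finset.sum_congr rfl hterm, add_comm]
  · simp only [hd, if_false, add_zero, zero_add]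
    exact (Finset.sum_congr rfl hterm).symm

/-- The multiplicity of an irreducible `π` in the Carlitz factorial `D_i` equals `S_i`. -/
lemma mult_Dcar {K : Type} [Field K] [Fintype K] (p : ℕ) [Fact p.Prime]
    [CharP K p] {π : K[X]} (hirr : Irreducible π) (i : ℕ) :
    multiplicity π (Dcar (Fintype.card K) K i) = Scar (Fintype.card K) π.natDegree i := by
  have hq2 : 1 < Fintype.card K := Fintype.one_lt_card
  have hprime : Prime π := hirr.prime
  induction i with
  | zero => simp [Dcar, Scar, multiplicity_of_one_right hirr.not_isUnit]
  | succ i ih =>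
    have hD : Dcar (Fintype.card K) K (i + 1)
        = (X ^ (Fintype.card K) ^ (i + 1) - X) * (Dcar (Fintype.card K) K i) ^ Fintype.card K :=
      rfl
    have hne : Dcar (Fintype.card K) K i ≠ 0 := Dcar_ne_zero hq2 i
    have hBne : (X ^ (Fintype.card K) ^ (i + 1) - X : K[X]) ≠ 0 :=
      FiniteField.X_pow_card_pow_sub_X_ne_zero K (Nat.succ_ne_zero i) hq2
    rw [hD, multiplicity_mul hprime
        (FiniteMultiplicity.of_not_isUnit hirr.not_isUnit
          (mul_ne_zero hBne (pow_ne_zero _ hne))),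
      FiniteMultiplicity.multiplicity_pow hprime
        (FiniteMultiplicity.of_not_isUnit hirr.not_isUnit hne),
      mult_galois_poly p hirr (Nat.succ_ne_zero i), ih,
      Scar_succ hirr.natDegree_pos]

/-- The key combinatorial inequality `S_a + q^a S_b ≤ S_{a+b}`. -/
lemma Scar_add_le {q δ : ℕ} (hq : 1 ≤ q) (hδ : 0 < δ) (a b : ℕ) :
    Scar q δ a + q ^ a * Scar q δ b ≤ Scar q δ (a + b) := by
  set A := a / δ with hA
  set B := b / δ with hB
  set J := (a + b) / δ with hJ
  have hBb : B * δ ≤ b := by rw [hB]; exact Nat.div_mul_le_self b δ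
  have hAa : A * δ ≤ a := by rw [hA]; exact Nat.div_mul_le_self a δ
  have hAB : A + B ≤ J := by
    rw [hJ, Nat.le_div_iff_mul_le hδ, add_mul]
    omega
  have h1 : q ^ a * Scar q δ b = ∑ j ∈ Finset.Ioc 0 B, q ^ (a + b - j * δ) := by
    unfold Scar
    rw [Finset.mul_sum]
    refine Finset.sum_congr rfl ?_
    intro j hj
    have hjd : j * δ ≤ b := (Nat.le_div_iff_mul_le hδ).mp (Finset.mem_Ioc.mp hj).2
    rw [← pow_add]
    congr 1
    omega
  have h2 : Scar q δ a ≤ ∑ j ∈ Finset.Ioc B (A + B), q ^ (a + b - j * δ) := by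
    have hmap : ∑ j ∈ Finset.Ioc B (A + B), q ^ (a + b - j * δ)
        = ∑ i ∈ Finset.Ioc 0 A, q ^ (a + b - (i + B) * δ) := by
      have he : Finset.Ioc B (A + B) = (Finset.Ioc 0 A).map (addRightEmbedding B) := by
        rw [Finset.map_add_right_Ioc, zero_add]
      rw [he, Finset.sum_map]
      simp [addRightEmbedding]
    rw [hmap]
    unfold Scar
    refine Finset.sum_le_sum ?_
    intro i _
    apply Nat.pow_le_pow_right hq
    have : (i + B) * δ = i * δ + B * δ := add_mul i B δ
    omega
  calc Scar q δ a + q ^ a * Scar q δ b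
      ≤ (∑ j ∈ Finset.Ioc B (A + B), q ^ (a + b - j * δ))
        + ∑ j ∈ Finset.Ioc 0 B, q ^ (a + b - j * δ) := by rw [h1]; exact add_le_add_left h2 _
    _ ≤ (∑ j ∈ Finset.Ioc B J, q ^ (a + b - j * δ))
        + ∑ j ∈ Finset.Ioc 0 B, q ^ (a + b - j * δ) := by
        refine add_le_add_left (Finset.sum_le_sum_of_subset ?_) _
        exact Finset.Ioc_subset_Ioc_right hAB
    _ = ∑ j ∈ Finset.Ioc 0 J, q ^ (a + b - j * δ) := by
        rw [add_comm]
        exact Finset.sum_Ioc_consecutive _ (Nat.zero_le _) (le_trans (Nat.le_add_left _ _) hAB)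
    _ = Scar q δ (a + b) := rfl

/-- `vpol` of a quotient of nonzero polynomials. -/
lemma vpol_div {F : Type} [Field F] {π f g : Polynomial F} (hπ : Prime π)
    (hf : f ≠ 0) (hg : g ≠ 0) :
    vpol π (algebraMap (Polynomial F) (RatFunc F) f / algebraMap (Polynomial F) (RatFunc F) g)
      = (multiplicity π f : ℤ) - multiplicity π g := by
  set t := algebraMap (Polynomial F) (RatFunc F) f / algebraMap (Polynomial F) (RatFunc F) g
    with ht
  have hfK : algebraMap (Polynomial F) (RatFunc F) f ≠ 0 := RatFunc.algebraMap_ne_zero hf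
  have hgK : algebraMap (Polynomial F) (RatFunc F) g ≠ 0 := RatFunc.algebraMap_ne_zero hg
  have htne : t ≠ 0 := div_ne_zero hfK hgK
  have hnum : t.num ≠ 0 := RatFunc.num_ne_zero htne
  have hden : t.denom ≠ 0 := t.denom_ne_zero
  have hdenK : algebraMap (Polynomial F) (RatFunc F) t.denom ≠ 0 :=
    RatFunc.algebraMap_ne_zero hden
  have key : t.num * g = f * t.denom := by
    apply RatFunc.algebraMap_injective F
    rw [map_mul, map_mul]
    rw [← div_eq_div_iff hdenK hgK]
    rw [RatFunc.num_div_denom t, ht]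
  have fin1 : FiniteMultiplicity π (t.num * g) :=
    FiniteMultiplicity.of_not_isUnit hπ.not_isUnit (mul_ne_zero hnum hg)
  have fin2 : FiniteMultiplicity π (f * t.denom) :=
    FiniteMultiplicity.of_not_isUnit hπ.not_isUnit (mul_ne_zero hf hden)
  have e1 : multiplicity π t.num + multiplicity π g
      = multiplicity π f + multiplicity π t.denom := by
    rw [← multiplicity_mul hπ fin1, ← multiplicity_mul hπ fin2, key]
  unfold vpol
  omega

/-- **Integrality of `K`-binomial coefficients at every finite place (Proposition 4).**
For every monic irreducible `π ∈ F_q[x]` and `0 ≤ m ≤ k`,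
`v_π(binom(k,m)_K) ≥ 0`, i.e. `|binom(k,m)_K|_π ≤ 1`. -/
theorem Kbinom_integral_at_every_place
    (p e q : ℕ) [Fact p.Prime] (he : 0 < e) (hq : q = p ^ e)
    (π : Polynomial (GaloisField p e)) (hmon : π.Monic) (hirr : Irreducible π)
    (k m : ℕ) (hm : m ≤ k) :
    0 ≤ vpol π (Kb q (GaloisField p e) k (m : ℤ)) := by
  set K := GaloisField p e with hK
  haveI : Fintype K := Fintype.ofFinite K
  have hcard : Fintype.card K = q := by
    rw [← Nat.card_eq_fintype_card, GaloisField.card p e he.ne', hq]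
  have hq2 : 1 < q := hcard ▸ Fintype.one_lt_card
  have hprime : Prime π := hirr.prime
  have hδ : 0 < π.natDegree := hirr.natDegree_pos
  have hne1 : Dcar q K k ≠ 0 := Dcar_ne_zero hq2 k
  have hne2 : Dcar q K m ≠ 0 := Dcar_ne_zero hq2 m
  have hne3 : Dcar q K (k - m) ≠ 0 := Dcar_ne_zero hq2 (k - m)
  have hKb : Kb q K k (m : ℤ) = algebraMap (Polynomial K) (RatFunc K) (Dcar q K k) /
      algebraMap (Polynomial K) (RatFunc K) (Dcar q K m * (Dcar q K (k - m)) ^ q ^ m) := by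
    rw [Kb, if_pos ⟨Int.ofNat_nonneg m, by exact_mod_cast hm⟩, Int.toNat_natCast,
      map_mul, map_pow]
  rw [hKb, vpol_div hprime hne1 (mul_ne_zero hne2 (pow_ne_zero _ hne3))]
  have hmul : multiplicity π (Dcar q K m * Dcar q K (k - m) ^ q ^ m)
      = multiplicity π (Dcar q K m) + q ^ m * multiplicity π (Dcar q K (k - m)) := by
    rw [multiplicity_mul hprime (FiniteMultiplicity.of_not_isUnit hprime.not_isUnit
        (mul_ne_zero hne2 (pow_ne_zero _ hne3))),
      FiniteMultiplicity.multiplicity_pow hprime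
        (FiniteMultiplicity.of_not_isUnit hprime.not_isUnit hne3)]
  rw [hmul]
  have hM : ∀ i : ℕ, multiplicity π (Dcar q K i) = Scar q π.natDegree i := by
    intro i
    have := mult_Dcar p hirr i
    rwa [hcard] at this
  have key := Scar_add_le (le_of_lt hq2) hδ m (k - m)
  rw [Nat.add_sub_cancel' hm] at key
  rw [hM k, hM m, hM (k - m)]
  have key' := (Nat.cast_le (α := ℤ)).mpr key
  push_cast at key' ⊢
  linarith
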